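/- If H' is a 6-partite intersecting hypergraph with 8 edges and covering number τ(H') = 4, then every edge of H' contains a vertex of degree 3. -/
import Mathlib


def Intersecting {V : Type*} (E : Finset (Finset V)) : Prop :=
  ∀ e ∈ E, ∀ f ∈ E, ∃ v, v ∈ e ∧ v ∈ f

def IsCover {V : Type*} (E : Finset (Finset V)) (C : Finset V) : Prop :=
  ∀ e ∈ E, ∃ v ∈ C, v ∈ e

noncomputable def coverNum {V : Type*} (E : Finset (Finset V)) : ℕ :=
  sInf {n | ∃ C : Finset V, IsCover E C ∧ C.card = n}

def Partite {V : Type*} (r : ℕ) (part : V → Fin r) (E : Finset (Finset V)) : Prop :=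
  ∀ e ∈ E, ∀ i : Fin r, (e.filter (fun v => part v = i)).card = 1

open Classical in
noncomputable def deg {V : Type*} (E : Finset (Finset V)) (v : V) : ℕ :=
  (E.filter (fun e => v ∈ e)).card

open Classical

lemma cover_of_intersecting {V : Type*} :
    ∀ (k : ℕ) (F : Finset (Finset V)),
      (∀ f ∈ F, ∀ g ∈ F, ∃ v, v ∈ f ∧ v ∈ g) → F.card ≤ 2 * k →
      ∃ C : Finset V, (∀ f ∈ F, ∃ v ∈ C, v ∈ f) ∧ C.card ≤ k := by
  intro k
  induction k with
  | zero =>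
    intro F hF hc
    simp only [Nat.mul_zero, Nat.le_zero, Finset.card_eq_zero] at hc
    exact ⟨∅, by simp [hc], by simp⟩
  | succ k ih =>
    intro F hF hc
    rcases F.eq_empty_or_nonempty with rfl | ⟨f, hf⟩
    · exact ⟨∅, by simp, by simp⟩
    rcases (F.erase f).eq_empty_or_nonempty with he | ⟨g, hg⟩
    · obtain ⟨v, hv, -⟩ := hF f hf f hf
      refine ⟨{v}, ?_, by simp⟩
      intro f' hf'
      have hff : f' = f := by
        by_contra h
        have : f' ∈ F.erase f := Finset.mem_erase.mpr ⟨h, hf'⟩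
        simp [he] at this
      exact ⟨v, by simp, hff ▸ hv⟩
    · have hgF : g ∈ F := Finset.mem_of_mem_erase hg
      obtain ⟨v, hvf, hvg⟩ := hF f hf g hgF
      set F' := (F.erase f).erase g with hF'
      have hsub : F' ⊆ F := fun x hx =>
        Finset.mem_of_mem_erase (Finset.mem_of_mem_erase hx)
      have hcard : F'.card ≤ 2 * k := by
        have h1 : (F.erase f).card = F.card - 1 := Finset.card_erase_of_mem hf
        have h2 : F'.card = (F.erase f).card - 1 := Finset.card_erase_of_mem hg
        have h3 : 0 < F.card := Finset.card_pos.mpr ⟨f, hf⟩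
        have h4 : 0 < (F.erase f).card := Finset.card_pos.mpr ⟨g, hg⟩
        omega
      obtain ⟨C, hC, hCc⟩ := ih F' (fun a ha b hb => hF a (hsub ha) b (hsub hb)) hcard
      refine ⟨insert v C, ?_, ?_⟩
      · intro f' hf'
        by_cases h1 : f' = f
        · exact ⟨v, Finset.mem_insert_self _ _, h1 ▸ hvf⟩
        by_cases h2 : f' = g
        · exact ⟨v, Finset.mem_insert_self _ _, h2 ▸ hvg⟩
        · obtain ⟨w, hw, hwf⟩ := hC f'
            (Finset.mem_erase.mpr ⟨h2, Finset.mem_erase.mpr ⟨h1, hf'⟩⟩)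
          exact ⟨w, Finset.mem_insert_of_mem hw, hwf⟩
      · have := Finset.card_insert_le v C
        omega

lemma maxdeg {V : Type*} (E : Finset (Finset V)) (hi : Intersecting E)
    (h8 : E.card = 8) (hτ : coverNum E = 4) : ∀ v, deg E v ≤ 3 := by
  intro v
  by_contra h
  push_neg at h
  have hd : deg E v = (E.filter (fun e => v ∈ e)).card := by
    simp [deg]
  have hsplit := Finset.card_filter_add_card_filter_not
    (s := E) (p := fun e => v ∈ e)
  set F := E.filter (fun e => ¬ v ∈ e) with hF
  have hFc : F.card ≤ 4 := by omega
  obtain ⟨C, hC, hCc⟩ := cover_of_intersecting 2 F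
    (fun a ha b hb => hi a (Finset.mem_of_mem_filter a ha) b (Finset.mem_of_mem_filter b hb))
    (by omega)
  have hcov : IsCover E (insert v C) := by
    intro e he
    by_cases hv : v ∈ e
    · exact ⟨v, Finset.mem_insert_self _ _, hv⟩
    · obtain ⟨w, hw, hwe⟩ := hC e (Finset.mem_filter.mpr ⟨he, hv⟩)
      exact ⟨w, Finset.mem_insert_of_mem hw, hwe⟩
  have h3 : coverNum E ≤ (insert v C).card :=
    Nat.sInf_le ⟨insert v C, hcov, rfl⟩
  have h4 := Finset.card_insert_le v C
  omega

theorem stmt3 {V : Type*} (part : V → Fin 6) (E : Finset (Finset V))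
    (hp : Partite 6 part E) (hi : Intersecting E) (h8 : E.card = 8)
    (hτ : coverNum E = 4) :
    ∀ e ∈ E, ∃ v ∈ e, deg E v = 3 := by
  intro e he
  have hmax := maxdeg E hi h8 hτ
  by_contra hcon
  push_neg at hcon
  have hdeg2 : ∀ v ∈ e, deg E v ≤ 2 := by
    intro v hv
    have h1 := hmax v
    have h2 := hcon v hv
    omega
  have hec : e.card = 6 := by
    have h := Finset.card_eq_sum_card_fiberwise
      (s := e) (t := (Finset.univ : Finset (Fin 6))) (f := part)
      (fun x _ => Finset.mem_univ _)
    rw [h, Finset.sum_congr rfl (fun i _ => hp e he i)]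
    simp
  have hupper : ∑ v ∈ e, deg E v ≤ 12 := by
    calc ∑ v ∈ e, deg E v ≤ ∑ _v ∈ e, 2 := Finset.sum_le_sum hdeg2
      _ = 12 := by rw [Finset.sum_const, hec]; rfl
  have hswap : ∑ v ∈ e, deg E v = ∑ f ∈ E, (e ∩ f).card := by
    have h1 : ∀ v, deg E v = ∑ f ∈ E, if v ∈ f then 1 else 0 := by
      intro v
      simp only [deg, Finset.card_filter]
    have h2 : ∀ f, (e ∩ f).card = ∑ v ∈ e, if v ∈ f then 1 else 0 := by
      intro f
      rw [← Finset.card_filter]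
      congr 1
    simp only [h1, h2]
    exact Finset.sum_comm
  have hlower : 13 ≤ ∑ f ∈ E, (e ∩ f).card := by
    have hE : E = insert e (E.erase e) := (Finset.insert_erase he).symm
    rw [hE, Finset.sum_insert (Finset.notMem_erase _ _)]
    have hee : (e ∩ e).card = 6 := by simp [hec]
    have h7 : (E.erase e).card = 7 := by
      rw [Finset.card_erase_of_mem he, h8]
    have hone : ∀ f ∈ E.erase e, 1 ≤ (e ∩ f).card := by
      intro f hf
      obtain ⟨v, hv1, hv2⟩ := hi e he f (Finset.mem_of_mem_erase hf)
      exact Finset.card_pos.mpr ⟨v, Finset.mem_inter.mpr ⟨hv1, hv2⟩⟩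
    have hsum7 : 7 ≤ ∑ f ∈ E.erase e, (e ∩ f).card := by
      calc (7 : ℕ) = ∑ _f ∈ E.erase e, 1 := by rw [Finset.sum_const, h7]; rfl
        _ ≤ ∑ f ∈ E.erase e, (e ∩ f).card := Finset.sum_le_sum hone
    omega
  omega
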